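/- For integers m, n, the assignment x ↦ x, y ↦ y z^{n+1} x^{m+1} z^{-1}, z ↦ z extends to a group isomorphism from H_{m,n} = ⟨x,y,z ∣ x = [x^m,z^n][y,z]⟩ to H_{−m−1,−n−1}. -/

import Mathlib

/-- The commutator convention of the paper: `[a,b] = a⁻¹ b⁻¹ a b`. -/
def cmt {G : Type*} [Group G] (a b : G) : G := a⁻¹ * b⁻¹ * a * b

/-- Relator set of `H_{m,n} = ⟨x,y,z ∣ x = [x^m,z^n][y,z]⟩` (generators `0 ↦ x`,
`1 ↦ y`, `2 ↦ z`). -/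
def Hrels (m n : ℤ) : Set (FreeGroup (Fin 3)) :=
  {(FreeGroup.of 0)⁻¹ *
    (cmt ((FreeGroup.of 0) ^ m) ((FreeGroup.of 2) ^ n) *
      cmt (FreeGroup.of 1) (FreeGroup.of 2))}

/-- The Baumslag group `H_{m,n}`. -/
def Hmn (m n : ℤ) : Type := PresentedGroup (Hrels m n)

instance (m n : ℤ) : Group (Hmn m n) := by unfold Hmn; infer_instance

section auxlemmas

variable {G : Type*} [Group G]

private lemma key_of_rel {x y z : G} {m n : ℤ}
    (h : x⁻¹ * (cmt (x ^ m) (z ^ n) * cmt y z) = 1) :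
    y⁻¹ * z⁻¹ * y * z = z ^ (-n) * x ^ (-m) * z ^ n * x ^ (m + 1) := by
  have h3 : x = cmt (x ^ m) (z ^ n) * cmt y z := inv_mul_eq_one.mp h
  calc y⁻¹ * z⁻¹ * y * z
      = (cmt (x ^ m) (z ^ n))⁻¹ * (cmt (x ^ m) (z ^ n) * cmt y z) := by
        simp only [cmt]; group
    _ = (cmt (x ^ m) (z ^ n))⁻¹ * x := by rw [← h3]
    _ = z ^ (-n) * x ^ (-m) * z ^ n * x ^ (m + 1) := by simp only [cmt]; group

private lemma rel1 (x y z : G) (m n : ℤ)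
    (h : y⁻¹ * z⁻¹ * y * z = z ^ (n+1) * x ^ (m+1) * z ^ (-n-1) * x ^ (-m)) :
    x⁻¹ * (cmt (x ^ m) (z ^ n) * cmt (y * z ^ (n+1) * x ^ (m+1) * z⁻¹) z) = 1 := by
  calc x⁻¹ * (cmt (x ^ m) (z ^ n) * cmt (y * z ^ (n+1) * x ^ (m+1) * z⁻¹) z)
      = (x⁻¹ * x ^ (-m) * z ^ (-n) * x ^ m * z ^ (n+1) * x ^ (-(m+1)) * z ^ (-(n+1))) *
        (y⁻¹ * z⁻¹ * y * z) * (z ^ n * x ^ (m+1)) := by simp only [cmt]; group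
    _ = (x⁻¹ * x ^ (-m) * z ^ (-n) * x ^ m * z ^ (n+1) * x ^ (-(m+1)) * z ^ (-(n+1))) *
        (z ^ (n+1) * x ^ (m+1) * z ^ (-n-1) * x ^ (-m)) * (z ^ n * x ^ (m+1)) := by rw [h]
    _ = 1 := by group

private lemma rel2 (x y z : G) (m n : ℤ)
    (h : y⁻¹ * z⁻¹ * y * z = z ^ (-n) * x ^ (-m) * z ^ n * x ^ (m+1)) :
    x⁻¹ * (cmt (x ^ (-m-1)) (z ^ (-n-1)) *
      cmt (z * y * z ^ (-n) * x ^ (-m) * z⁻¹) z) = 1 := by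
  calc x⁻¹ * (cmt (x ^ (-m-1)) (z ^ (-n-1)) * cmt (z * y * z ^ (-n) * x ^ (-m) * z⁻¹) z)
      = (x⁻¹ * x ^ (-(-m-1)) * z ^ (-(-n-1)) * x ^ (-m-1) * z ^ (-n-1) * z * x ^ m * z ^ n) *
        (y⁻¹ * z⁻¹ * y * z) * (z ^ (-n-1) * x ^ (-m)) := by simp only [cmt]; group
    _ = (x⁻¹ * x ^ (-(-m-1)) * z ^ (-(-n-1)) * x ^ (-m-1) * z ^ (-n-1) * z * x ^ m * z ^ n) *
        (z ^ (-n) * x ^ (-m) * z ^ n * x ^ (m+1)) * (z ^ (-n-1) * x ^ (-m)) := by rw [h]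
    _ = 1 := by group

private lemma rel3 (x y z : G) (m n : ℤ)
    (h : y⁻¹ * z⁻¹ * y * z = z ^ (-n) * x ^ (-m) * z ^ n * x ^ (m+1)) :
    z * y * z ^ (-n) * x ^ (-m) * z⁻¹ * z ^ (n+1) * x ^ (m+1) * z⁻¹ = y := by
  calc z * y * z ^ (-n) * x ^ (-m) * z⁻¹ * z ^ (n+1) * x ^ (m+1) * z⁻¹
      = (z * y) * (z ^ (-n) * x ^ (-m) * z ^ n * x ^ (m+1)) * z⁻¹ := by group
    _ = (z * y) * (y⁻¹ * z⁻¹ * y * z) * z⁻¹ := by rw [h]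
    _ = y := by group

private lemma rel4 (x y z : G) (m n : ℤ)
    (h : y⁻¹ * z⁻¹ * y * z = z ^ (n+1) * x ^ (m+1) * z ^ (-n-1) * x ^ (-m)) :
    z * (y * z ^ (n+1) * x ^ (m+1) * z⁻¹) * z ^ (-n) * x ^ (-m) * z⁻¹ = y := by
  calc z * (y * z ^ (n+1) * x ^ (m+1) * z⁻¹) * z ^ (-n) * x ^ (-m) * z⁻¹
      = (z * y) * (z ^ (n+1) * x ^ (m+1) * z ^ (-n-1) * x ^ (-m)) * z⁻¹ := by group
    _ = (z * y) * (y⁻¹ * z⁻¹ * y * z) * z⁻¹ := by rw [h]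
    _ = y := by group

end auxlemmas

private lemma keyH (m n : ℤ) :
    (PresentedGroup.of 1 : Hmn m n)⁻¹ * (PresentedGroup.of 2)⁻¹ *
      PresentedGroup.of 1 * PresentedGroup.of 2 =
    (PresentedGroup.of 2 : Hmn m n) ^ (-n) * (PresentedGroup.of 0) ^ (-m) *
      (PresentedGroup.of 2) ^ n * (PresentedGroup.of 0) ^ (m + 1) := by
  apply key_of_rel (x := (PresentedGroup.of 0 : Hmn m n))
  have hmem : ((FreeGroup.of 0)⁻¹ *
      (cmt ((FreeGroup.of 0) ^ m) ((FreeGroup.of 2) ^ n) *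
        cmt (FreeGroup.of 1) (FreeGroup.of 2)) : FreeGroup (Fin 3)) ∈
      Subgroup.normalClosure (Hrels m n) :=
    Subgroup.subset_normalClosure rfl
  have h1 := (QuotientGroup.eq_one_iff _).2 hmem
  simp only [cmt, QuotientGroup.mk_mul, QuotientGroup.mk_inv, QuotientGroup.mk_zpow] at h1
  exact h1

set_option maxHeartbeats 1600000 in
/-- `x ↦ x`, `y ↦ y z^{n+1} x^{m+1} z⁻¹`, `z ↦ z` extends to an isomorphism
`H_{m,n} ≅ H_{-m-1,-n-1}`. -/
theorem stmt_5 (m n : ℤ) :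
    ∃ φ : Hmn m n ≃* Hmn (-m - 1) (-n - 1),
      φ (PresentedGroup.of 0) = PresentedGroup.of 0 ∧
      φ (PresentedGroup.of 1) =
        PresentedGroup.of 1 * (PresentedGroup.of 2 : Hmn (-m - 1) (-n - 1)) ^ (n + 1) *
          (PresentedGroup.of 0 : Hmn (-m - 1) (-n - 1)) ^ (m + 1) *
          (PresentedGroup.of 2)⁻¹ ∧
      φ (PresentedGroup.of 2) = PresentedGroup.of 2 := by
  have key' : (PresentedGroup.of 1 : Hmn (-m-1) (-n-1))⁻¹ * (PresentedGroup.of 2)⁻¹ *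
      PresentedGroup.of 1 * PresentedGroup.of 2 =
      (PresentedGroup.of 2 : Hmn (-m-1) (-n-1)) ^ (n+1) * (PresentedGroup.of 0) ^ (m+1) *
        (PresentedGroup.of 2) ^ (-n-1) * (PresentedGroup.of 0) ^ (-m) := by
    have h := keyH (-m-1) (-n-1)
    rw [show -(-n-1) = n+1 by ring, show -(-m-1) = m+1 by ring,
      show (-m-1)+1 = -m by ring] at h
    exact h
  have key : (PresentedGroup.of 1 : Hmn m n)⁻¹ * (PresentedGroup.of 2)⁻¹ *
      PresentedGroup.of 1 * PresentedGroup.of 2 =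
      (PresentedGroup.of 2 : Hmn m n) ^ (-n) * (PresentedGroup.of 0) ^ (-m) *
        (PresentedGroup.of 2) ^ n * (PresentedGroup.of 0) ^ (m+1) := keyH m n
  have hf : ∀ r ∈ Hrels m n, FreeGroup.lift (fun i : Fin 3 =>
      if i = 0 then (PresentedGroup.of 0 : Hmn (-m-1) (-n-1))
      else if i = 1 then
        PresentedGroup.of 1 * (PresentedGroup.of 2) ^ (n+1) *
          (PresentedGroup.of 0) ^ (m+1) * (PresentedGroup.of 2)⁻¹
      else PresentedGroup.of 2) r = 1 := by
    intro r hr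
    rw [Hrels, Set.mem_singleton_iff] at hr
    subst hr
    simp only [cmt, map_mul, map_inv, map_zpow, FreeGroup.lift_apply_of, Fin.isValue,
      Fin.reduceEq, reduceIte, if_true, if_false]
    exact rel1 _ _ _ m n key'
  have hg : ∀ r ∈ Hrels (-m-1) (-n-1), FreeGroup.lift (fun i : Fin 3 =>
      if i = 0 then (PresentedGroup.of 0 : Hmn m n)
      else if i = 1 then
        PresentedGroup.of 2 * PresentedGroup.of 1 * (PresentedGroup.of 2) ^ (-n) *
          (PresentedGroup.of 0) ^ (-m) * (PresentedGroup.of 2)⁻¹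
      else PresentedGroup.of 2) r = 1 := by
    intro r hr
    rw [Hrels, Set.mem_singleton_iff] at hr
    subst hr
    simp only [cmt, map_mul, map_inv, map_zpow, FreeGroup.lift_apply_of, Fin.isValue,
      Fin.reduceEq, reduceIte, if_true, if_false]
    exact rel2 _ _ _ m n key
  let f : Hmn m n →* Hmn (-m-1) (-n-1) := PresentedGroup.toGroup hf
  let g : Hmn (-m-1) (-n-1) →* Hmn m n := PresentedGroup.toGroup hg
  have hf0 : f (PresentedGroup.of 0) = PresentedGroup.of 0 := by
    have h := PresentedGroup.toGroup.of hf (x := 0)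
    simp only [Fin.isValue, Fin.reduceEq, reduceIte, if_true, if_false] at h
    exact h
  have hf1 : f (PresentedGroup.of 1) =
      PresentedGroup.of 1 * (PresentedGroup.of 2) ^ (n+1) *
        (PresentedGroup.of 0) ^ (m+1) * (PresentedGroup.of 2)⁻¹ := by
    have h := PresentedGroup.toGroup.of hf (x := 1)
    simp only [Fin.isValue, Fin.reduceEq, reduceIte, if_true, if_false] at h
    exact h
  have hf2 : f (PresentedGroup.of 2) = PresentedGroup.of 2 := by
    have h := PresentedGroup.toGroup.of hf (x := 2)
    simp only [Fin.isValue, Fin.reduceEq, reduceIte, if_true, if_false] at h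
    exact h
  have hg0 : g (PresentedGroup.of 0) = PresentedGroup.of 0 := by
    have h := PresentedGroup.toGroup.of hg (x := 0)
    simp only [Fin.isValue, Fin.reduceEq, reduceIte, if_true, if_false] at h
    exact h
  have hg1 : g (PresentedGroup.of 1) =
      PresentedGroup.of 2 * PresentedGroup.of 1 * (PresentedGroup.of 2) ^ (-n) *
        (PresentedGroup.of 0) ^ (-m) * (PresentedGroup.of 2)⁻¹ := by
    have h := PresentedGroup.toGroup.of hg (x := 1)
    simp only [Fin.isValue, Fin.reduceEq, reduceIte, if_true, if_false] at h
    exact h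
  have hg2 : g (PresentedGroup.of 2) = PresentedGroup.of 2 := by
    have h := PresentedGroup.toGroup.of hg (x := 2)
    simp only [Fin.isValue, Fin.reduceEq, reduceIte, if_true, if_false] at h
    exact h
  have hgf : g.comp f = MonoidHom.id (Hmn m n) := by
    apply PresentedGroup.ext
    intro i
    fin_cases i
    · show g (f (PresentedGroup.of 0)) = (PresentedGroup.of 0 : Hmn m n)
      rw [hf0, hg0]
    · show g (f (PresentedGroup.of 1)) = (PresentedGroup.of 1 : Hmn m n)
      erw [hf1, map_mul, map_mul, map_mul, map_inv,
        map_zpow, map_zpow, hg0, hg1, hg2]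
      have h := rel3 (PresentedGroup.of 0 : Hmn m n) (PresentedGroup.of 1) (PresentedGroup.of 2)
        m n key
      exact h
    · show g (f (PresentedGroup.of 2)) = (PresentedGroup.of 2 : Hmn m n)
      rw [hf2, hg2]
  have hfg : f.comp g = MonoidHom.id (Hmn (-m-1) (-n-1)) := by
    apply PresentedGroup.ext
    intro i
    fin_cases i
    · show f (g (PresentedGroup.of 0)) =
        (PresentedGroup.of 0 : Hmn (-m-1) (-n-1))
      rw [hg0, hf0]
    · show f (g (PresentedGroup.of 1)) =
        (PresentedGroup.of 1 : Hmn (-m-1) (-n-1))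
      erw [hg1, map_mul, map_mul, map_mul, map_mul,
        map_inv, map_zpow, map_zpow, hf0, hf1, hf2]
      have h := rel4 (PresentedGroup.of 0 : Hmn (-m-1) (-n-1)) (PresentedGroup.of 1)
        (PresentedGroup.of 2) m n key'
      exact h
    · show f (g (PresentedGroup.of 2)) =
        (PresentedGroup.of 2 : Hmn (-m-1) (-n-1))
      rw [hg2, hf2]
  exact ⟨MonoidHom.toMulEquiv f g hgf hfg, hf0, hf1, hf2⟩
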